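/- There exist a basic sequence Q and a real number x in [0,1) such that x is Q-normal but x is not Q-distribution normal. -/

import Mathlib

/-- `Q_n^{(k)} = Σ_{j=1}^n 1/(q_j q_{j+1} ⋯ q_{j+k-1})` for a basic sequence `q` (1-indexed). -/
noncomputable def QNkG (q : ℕ → ℕ) (k n : ℕ) : ℝ :=
  ∑ j ∈ Finset.Icc 1 n, (∏ t ∈ Finset.range k, (q (j + t) : ℝ))⁻¹

/-- `N_n^Q(B, x)`: the number of occurrences of the block `B` starting at a position
no greater than `n` in the `Q`-Cantor series expansion `(E_1, E_2, …)` of `x`. -/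
def NQG (E : ℕ → ℕ) (B : List ℕ) (n : ℕ) : ℕ :=
  ((Finset.Icc 1 n).filter fun j => (List.range B.length).map (fun t => E (j + t)) = B).card

/-- A real number whose `Q`-Cantor series digit sequence is `E` is `Q`-normal of order `k`
if for every block `B` of length `k`, `N_n^Q(B,x)/Q_n^{(k)} → 1`. -/
def QNormalOfOrder (q E : ℕ → ℕ) (k : ℕ) : Prop :=
  ∀ B : List ℕ, B.length = k →
    Filter.Tendsto (fun n => (NQG E B n : ℝ) / QNkG q k n) Filter.atTop (nhds 1)

/-- `Q`-normality: `Q`-normality of order `k` for every `k ≥ 1`. -/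
def QNormal (q E : ℕ → ℕ) : Prop := ∀ k : ℕ, 1 ≤ k → QNormalOfOrder q E k

/-- The value `Σ_{n=1}^∞ E_n/(q_1 ⋯ q_n)` of a `Q`-Cantor series with digits `E` (1-indexed). -/
noncomputable def cantorVal (q E : ℕ → ℕ) : ℝ :=
  ∑' n : ℕ, (E (n + 1) : ℝ) / ∏ m ∈ Finset.range (n + 1), (q (m + 1) : ℝ)

/-- `T_{Q,n}(x) = q_1 ⋯ q_n · x (mod 1)`. -/
noncomputable def TQ (q : ℕ → ℕ) (x : ℝ) (n : ℕ) : ℝ :=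
  Int.fract ((∏ m ∈ Finset.range n, (q (m + 1) : ℝ)) * x)

/-- A sequence `u` of real numbers is uniformly distributed mod 1. -/
def UDMod1 (u : ℕ → ℝ) : Prop :=
  ∀ a b : ℝ, 0 ≤ a → a < b → b ≤ 1 →
    Filter.Tendsto
      (fun N => (((Finset.range N).filter fun n =>
        a ≤ Int.fract (u n) ∧ Int.fract (u n) < b).card : ℝ) / N)
      Filter.atTop (nhds (b - a))

namespace St9X
open Finset

lemma card_filter_mul (D X : ℕ) (φ : ℕ → Prop) [DecidablePred φ] :
    ((Finset.range (X*D)).filter φ).card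
      = ∑ x ∈ Finset.range X, ((Finset.range D).filter (fun r => φ (x*D + r))).card := by
  induction X with
  | zero => simp
  | succ X ih =>
    rw [Finset.sum_range_succ, ← ih]
    have hXD : (X+1)*D = X*D + D := by ring
    have hdisj : Disjoint ((Finset.range (X*D)).filter φ)
        ((((Finset.range D).map (addLeftEmbedding (X*D))).filter φ)) := by
      refine Finset.disjoint_left.mpr ?_
      intro a ha hb
      simp only [Finset.mem_filter, Finset.mem_range] at ha
      simp only [Finset.mem_filter, Finset.mem_map] at hb
      obtain ⟨⟨r, hr, hra⟩, _⟩ := hb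
      have : addLeftEmbedding (X*D) r = X*D + r := rfl
      simp only [Finset.mem_range] at hr
      omega
    rw [hXD, Finset.range_add, Finset.filter_union, Finset.card_union_of_disjoint hdisj,
      Finset.filter_map, Finset.card_map]
    have heq : (Finset.range D).filter (φ ∘ ⇑(addLeftEmbedding (X*D)))
        = (Finset.range D).filter (fun r => φ (X*D + r)) := by
      apply Finset.filter_congr
      intro r _
      have : addLeftEmbedding (X*D) r = X*D + r := rfl
      simp [Function.comp, this]
    rw [heq]

lemma count_mul_of_periodic (P c X : ℕ) (φ : ℕ → Prop) [DecidablePred φ]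
    (hper : ∀ x r, r < P → (φ (x*P + r) ↔ φ r))
    (hc : ((Finset.range P).filter φ).card = c) :
    ((Finset.range (X*P)).filter φ).card = X*c := by
  rw [card_filter_mul]
  have h : ∀ x ∈ Finset.range X, ((Finset.range P).filter (fun r => φ (x*P + r))).card = c := by
    intro x _
    rw [← hc]
    congr 1
    apply Finset.filter_congr
    intro r hr
    simp only [Finset.mem_range] at hr
    simp [hper x r hr]
  rw [Finset.sum_congr rfl h, Finset.sum_const, Finset.card_range, smul_eq_mul]

lemma count_mono (φ : ℕ → Prop) [DecidablePred φ] {a b : ℕ} (h : a ≤ b) :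
    ((Finset.range a).filter φ).card ≤ ((Finset.range b).filter φ).card :=
  Finset.card_le_card (Finset.filter_subset_filter _ (Finset.range_subset_range.mpr h))

lemma count_bounds (P c T : ℕ) (hP : 0 < P) (φ : ℕ → Prop) [DecidablePred φ]
    (hper : ∀ x r, r < P → (φ (x*P + r) ↔ φ r))
    (hc : ((Finset.range P).filter φ).card = c) :
    (T/P)*c ≤ ((Finset.range T).filter φ).card ∧
      ((Finset.range T).filter φ).card ≤ (T/P)*c + c := by
  have h1 : (T/P)*P ≤ T := Nat.div_mul_le_self T P
  have h2 : T ≤ (T/P+1)*P := by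
    have := Nat.div_add_mod T P
    have := Nat.mod_lt T hP
    nlinarith
  constructor
  · calc (T/P)*c = ((Finset.range ((T/P)*P)).filter φ).card :=
        (count_mul_of_periodic P c (T/P) φ hper hc).symm
    _ ≤ _ := count_mono φ h1
  · calc ((Finset.range T).filter φ).card
        ≤ ((Finset.range ((T/P+1)*P)).filter φ).card := count_mono φ h2
    _ = (T/P+1)*c := count_mul_of_periodic P c (T/P+1) φ hper hc
    _ = (T/P)*c + c := by ring

lemma sum_digits_lt (m k : ℕ) (hm : 1 ≤ m) (b : ℕ → ℕ) (hb : ∀ t, t < k → b t < m) :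
    ∑ t ∈ Finset.range k, b t * m^t < m^k := by
  induction k with
  | zero => simp
  | succ k ih =>
    rw [Finset.sum_range_succ]
    have h1 : ∑ t ∈ Finset.range k, b t * m^t < m^k := ih (fun t ht => hb t (by omega))
    have h2 : b k ≤ m - 1 := by have := hb k (by omega); omega
    have h3 : b k * m^k ≤ (m-1) * m^k := Nat.mul_le_mul_right _ h2
    have h4 : m^(k+1) = m * m^k := by ring
    have h5 : 1 ≤ m^k := Nat.one_le_pow _ _ (by omega)
    have : (m-1) * m^k + m^k = m * m^k := by
      have : m - 1 + 1 = m := by omega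
      calc (m-1)*m^k + m^k = (m-1+1) * m^k := by ring
      _ = m * m^k := by rw [this]
    omega

lemma digit_of_sum (m k : ℕ) (b : ℕ → ℕ) (hb : ∀ s, s < k → b s < m) (t : ℕ) (ht : t < k) :
    (∑ s ∈ Finset.range k, b s * m^s) / m^t % m = b t := by
  have hm : 1 ≤ m := by have := hb t ht; omega
  have hsplit : ∑ s ∈ Finset.range k, b s * m^s
      = (∑ s ∈ Finset.range t, b s * m^s) + m^t * (∑ s ∈ Finset.range (k-t), b (t+s) * m^s) := by
    have h1 : ∑ s ∈ Finset.range k, b s * m^s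
        = ∑ s ∈ Finset.Ico 0 t, b s * m^s + ∑ s ∈ Finset.Ico t k, b s * m^s := by
      rw [Finset.sum_Ico_consecutive _ (Nat.zero_le t) (le_of_lt ht), ← Finset.range_eq_Ico]
    have h2 : ∑ s ∈ Finset.Ico t k, b s * m^s
        = ∑ s ∈ Finset.range (k-t), b (t+s) * m^(t+s) := Finset.sum_Ico_eq_sum_range _ _ _
    have h3 : ∑ s ∈ Finset.range (k-t), b (t+s) * m^(t+s)
        = m^t * (∑ s ∈ Finset.range (k-t), b (t+s) * m^s) := by
      rw [Finset.mul_sum]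
      apply Finset.sum_congr rfl
      intro s _
      rw [pow_add]; ring
    rw [h1, h2, h3, ← Finset.range_eq_Ico]
  have hL : (∑ s ∈ Finset.range t, b s * m^s) < m^t :=
    sum_digits_lt m t hm b (fun s hs => hb s (by omega))
  rw [hsplit, Nat.add_mul_div_left _ _ (Nat.pow_pos (n := t) (by omega)),
    Nat.div_eq_of_lt hL, Nat.zero_add]
  have hkt : k - t = (k - t - 1) + 1 := by omega
  rw [hkt, Finset.sum_range_succ']
  simp only [pow_zero, mul_one, add_zero]
  have : ∑ s ∈ Finset.range (k-t-1), b (t+(s+1)) * m^(s+1)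
      = m * ∑ s ∈ Finset.range (k-t-1), b (t+(s+1)) * m^s := by
    rw [Finset.mul_sum]
    apply Finset.sum_congr rfl
    intro s _; ring
  rw [this, add_comm, Nat.add_mul_mod_self_left]
  exact Nat.mod_eq_of_lt (hb t ht)

lemma eq_of_digits_eq (m : ℕ) (hm : 1 ≤ m) : ∀ (k x y : ℕ), x < m^k → y < m^k →
    (∀ t, t < k → x/m^t%m = y/m^t%m) → x = y := by
  intro k
  induction k with
  | zero => intro x y hx hy _; simp at hx hy; omega
  | succ k ih =>
    intro x y hx hy h
    have h0 : x % m = y % m := by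
      have := h 0 (by omega); simpa using this
    have hdiv : x / m = y / m := by
      apply ih
      · rw [Nat.div_lt_iff_lt_mul (by omega)]
        calc x < m^(k+1) := hx
        _ = m^k * m := by ring
      · rw [Nat.div_lt_iff_lt_mul (by omega)]
        calc y < m^(k+1) := hy
        _ = m^k * m := by ring
      · intro t ht
        have := h (t+1) (by omega)
        rwa [pow_succ', ← Nat.div_div_eq_div_mul, ← Nat.div_div_eq_div_mul] at this
    have hx' := Nat.div_add_mod x m
    have hy' := Nat.div_add_mod y m
    rw [hdiv, h0] at hx'
    omega

lemma mid_digit (m k t p : ℕ) (ht : t < k) (g : ℕ) :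
    (g / m^p % m^k) / m^t % m = g / m^(p+t) % m := by
  have h1 : m^k = m^t * m^(k-t) := by rw [← pow_add]; congr 1; omega
  rw [h1, Nat.mod_mul_right_div_self]
  have h2 : (m:ℕ) ∣ m^(k-t) := dvd_pow_self m (by omega)
  rw [Nat.mod_mod_of_dvd _ h2, Nat.div_div_eq_div_mul, ← pow_add]

lemma window_iff (m k p : ℕ) (hm : 1 ≤ m) (b : ℕ → ℕ) (hb : ∀ t, t < k → b t < m) (g : ℕ) :
    (∀ t, t < k → g / m^(p+t) % m = b t) ↔
      g / m^p % m^k = ∑ t ∈ Finset.range k, b t * m^t := by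
  set v := ∑ t ∈ Finset.range k, b t * m^t with hv
  have hvlt : v < m^k := sum_digits_lt m k hm b hb
  have hylt : g / m^p % m^k < m^k := Nat.mod_lt _ (Nat.pow_pos (by omega))
  constructor
  · intro h
    apply eq_of_digits_eq m hm k _ _ hylt hvlt
    intro t ht
    rw [mid_digit m k t p ht, digit_of_sum m k b hb t ht]
    exact h t ht
  · intro h t ht
    rw [← mid_digit m k t p ht, h]
    exact digit_of_sum m k b hb t ht

lemma card_core (m K p k v : ℕ) (hm : 1 ≤ m) (hpk : p + k ≤ K) (hv : v < m^k) :
    ((Finset.range (m^K)).filter (fun g => g / m^p % m^k = v)).card = m^(K-k) := by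
  have hpow : ∀ j : ℕ, 0 < m^j := fun j => Nat.pow_pos (by omega)
  have hcardprod : ((Finset.range (m^p)) ×ˢ (Finset.range (m^(K-(p+k))))).card
      = m^p * m^(K-(p+k)) := by simp
  rw [show m^(K-k) = m^p * m^(K-(p+k)) by rw [← pow_add]; congr 1; omega, ← hcardprod]
  apply Finset.card_bij' (fun g _ => (g % m^p, g / m^(p+k)))
    (fun ab _ => ab.1 + m^p * (v + m^k * ab.2))
  · intro g hg
    simp only [Finset.mem_filter, Finset.mem_range] at hg
    simp only [Finset.mem_product, Finset.mem_range]
    constructor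
    · exact Nat.mod_lt _ (hpow p)
    · rw [Nat.div_lt_iff_lt_mul (hpow (p+k))]
      calc g < m^K := hg.1
      _ = m^(K-(p+k)) * m^(p+k) := by rw [← pow_add]; congr 1; omega
  · intro ab hab
    simp only [Finset.mem_product, Finset.mem_range] at hab
    simp only [Finset.mem_filter, Finset.mem_range]
    obtain ⟨ha, hb2⟩ := hab
    constructor
    · calc ab.1 + m^p * (v + m^k * ab.2) < m^p + m^p * (v + m^k * ab.2) := by omega
      _ = m^p * (1 + v + m^k * ab.2) := by ring
      _ ≤ m^p * (m^k + m^k * ab.2) := by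
          apply Nat.mul_le_mul_left; omega
      _ = m^(p+k) * (1 + ab.2) := by rw [pow_add]; ring
      _ ≤ m^(p+k) * m^(K-(p+k)) := by
          apply Nat.mul_le_mul_left; omega
      _ = m^K := by rw [← pow_add]; congr 1; omega
    · rw [Nat.add_mul_div_left _ _ (hpow p), Nat.div_eq_of_lt ha, Nat.zero_add,
        Nat.add_mul_mod_self_left, Nat.mod_eq_of_lt hv]
  · intro g hg
    simp only [Finset.mem_filter, Finset.mem_range] at hg
    have h1 : g / m^p % m^k = v := hg.2
    have h2 : g % m^p + m^p * (g / m^p) = g := Nat.mod_add_div g (m^p)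
    have h3 : g / m^p % m^k + m^k * (g / m^p / m^k) = g / m^p := Nat.mod_add_div _ _
    rw [Nat.div_div_eq_div_mul, ← pow_add] at h3
    rw [← h1, h3, h2]
  · intro ab hab
    simp only [Finset.mem_product, Finset.mem_range] at hab
    obtain ⟨ha, hb2⟩ := hab
    have e1 : (ab.1 + m^p * (v + m^k * ab.2)) % m^p = ab.1 := by
      rw [Nat.add_mul_mod_self_left, Nat.mod_eq_of_lt ha]
    have e2 : (ab.1 + m^p * (v + m^k * ab.2)) / m^(p+k) = ab.2 := by
      have : ab.1 + m^p * (v + m^k * ab.2) = (ab.1 + m^p * v) + m^(p+k) * ab.2 := by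
        rw [pow_add]; ring
      rw [this, Nat.add_mul_div_left _ _ (hpow (p+k)), Nat.div_eq_of_lt, Nat.zero_add]
      calc ab.1 + m^p * v < m^p + m^p * v := by omega
      _ = m^p * (1 + v) := by ring
      _ ≤ m^p * m^k := by apply Nat.mul_le_mul_left; omega
      _ = m^(p+k) := by rw [← pow_add]
    exact Prod.ext e1 e2

def PhiW (m k o : ℕ) : Prop := o % (4*m) + k ≤ m
def PhiX (m k v o : ℕ) : Prop :=
  o % (4*m) + k ≤ m ∧ ((o / (4*m)) % m^m) / m^(o % (4*m)) % m^k = v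

instance (m k : ℕ) : DecidablePred (PhiW m k) := fun _ => by unfold PhiW; infer_instance
instance (m k v : ℕ) : DecidablePred (PhiX m k v) := fun _ => by unfold PhiX; infer_instance

lemma mod4m_period (m x r : ℕ) : (x*(4*m*m^m) + r) % (4*m) = r % (4*m) := by
  rw [show x*(4*m*m^m) + r = r + (x*m^m)*(4*m) by ring, Nat.add_mul_mod_self_right]

lemma div4m_period (m x r : ℕ) (hm : 0 < m) :
    ((x*(4*m*m^m) + r) / (4*m)) % m^m = (r/(4*m)) % m^m := by
  rw [show x*(4*m*m^m) + r = r + (x*m^m)*(4*m) by ring,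
    Nat.add_mul_div_right _ _ (show 0 < 4*m by omega), Nat.add_mul_mod_self_right]

lemma PhiW_periodic (m k : ℕ) : ∀ x r, r < 4*m*m^m → (PhiW m k (x*(4*m*m^m) + r) ↔ PhiW m k r) := by
  intro x r _
  unfold PhiW
  rw [mod4m_period]

lemma PhiX_periodic (m k v : ℕ) (hm : 0 < m) :
    ∀ x r, r < 4*m*m^m → (PhiX m k v (x*(4*m*m^m) + r) ↔ PhiX m k v r) := by
  intro x r _
  unfold PhiX
  rw [mod4m_period, div4m_period m x r hm]

lemma filter_range_le (D c : ℕ) (hc : c ≤ D) :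
    (Finset.range D).filter (fun r => r < c) = Finset.range c := by
  ext r
  simp only [Finset.mem_filter, Finset.mem_range]
  omega

lemma count_PhiW (m k : ℕ) (hm : 1 ≤ m) (hk : k ≤ m) :
    ((Finset.range ((m^m)*(4*m))).filter (PhiW m k)).card = m^m * (m-k+1) := by
  rw [card_filter_mul]
  have h : ∀ x ∈ Finset.range (m^m),
      ((Finset.range (4*m)).filter (fun r => PhiW m k (x*(4*m) + r))).card = m-k+1 := by
    intro x _
    have heq : (Finset.range (4*m)).filter (fun r => PhiW m k (x*(4*m) + r))
        = (Finset.range (4*m)).filter (fun r => r < m-k+1) := by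
      apply Finset.filter_congr
      intro r hr
      simp only [Finset.mem_range] at hr
      unfold PhiW
      rw [show x*(4*m) + r = r + x*(4*m) by ring, Nat.add_mul_mod_self_right,
        Nat.mod_eq_of_lt hr]
      constructor <;> intro <;> omega
    rw [heq, filter_range_le _ _ (by omega), Finset.card_range]
  rw [Finset.sum_congr rfl h, Finset.sum_const, Finset.card_range, smul_eq_mul]

lemma count_PhiX (m k v : ℕ) (hm : 1 ≤ m) (hk : k ≤ m) (hv : v < m^k) :
    ((Finset.range ((m^m)*(4*m))).filter (PhiX m k v)).card = m^(m-k) * (m-k+1) := by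
  rw [card_filter_mul]
  have h : ∀ x ∈ Finset.range (m^m),
      ((Finset.range (4*m)).filter (fun r => PhiX m k v (x*(4*m) + r))).card
        = ((Finset.range (4*m)).filter
            (fun r => r + k ≤ m ∧ x / m^r % m^k = v)).card := by
    intro x hx
    simp only [Finset.mem_range] at hx
    congr 1
    apply Finset.filter_congr
    intro r hr
    simp only [Finset.mem_range] at hr
    unfold PhiX
    rw [show x*(4*m) + r = r + x*(4*m) by ring, Nat.add_mul_mod_self_right,
      Nat.mod_eq_of_lt hr, Nat.add_mul_div_right _ _ (show 0 < 4*m by omega),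
      Nat.div_eq_of_lt hr, Nat.zero_add, Nat.mod_eq_of_lt hx]
  rw [Finset.sum_congr rfl h]
  have swap : ∀ x ∈ Finset.range (m^m),
      ((Finset.range (4*m)).filter (fun r => r + k ≤ m ∧ x / m^r % m^k = v)).card
      = ∑ r ∈ Finset.range (4*m), if r + k ≤ m ∧ x / m^r % m^k = v then 1 else 0 := by
    intro x _
    rw [Finset.card_filter]
  rw [Finset.sum_congr rfl swap, Finset.sum_comm]
  have inner : ∀ r ∈ Finset.range (4*m),
      (∑ x ∈ Finset.range (m^m), if r + k ≤ m ∧ x / m^r % m^k = v then 1 else 0)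
      = if r + k ≤ m then m^(m-k) else 0 := by
    intro r _
    by_cases hrk : r + k ≤ m
    · simp only [hrk, true_and, if_true]
      rw [← Finset.card_filter]
      exact card_core m m r k v hm hrk hv
    · simp only [hrk, false_and, if_false]
      simp
  rw [Finset.sum_congr rfl inner, ← Finset.sum_filter]
  have : (Finset.range (4*m)).filter (fun r => r + k ≤ m)
      = (Finset.range (4*m)).filter (fun r => r < m-k+1) := by
    apply Finset.filter_congr
    intro r _
    constructor <;> intro <;> omega
  rw [this, filter_range_le _ _ (by omega)]
  rw [Finset.sum_const, Finset.card_range, smul_eq_mul, Nat.mul_comm]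


end St9X

namespace St9

def Rf (s i : ℕ) : ℕ := (s + i + 3)^(3*i+30)
def cy (i : ℕ) : ℕ := 4*(i+2)*(i+2)^(i+2)
def sA : ℕ → ℕ
  | 0 => 0
  | i+1 => sA i + Rf (sA i) i * cy i
def ln (i : ℕ) : ℕ := Rf (sA i) i * cy i
def Mb (i : ℕ) : ℕ := sA (i+1) + 2

lemma sA_succ (i : ℕ) : sA (i+1) = sA i + ln i := rfl

lemma Rf_pos (s i : ℕ) : 0 < Rf s i := Nat.pow_pos (by omega)
lemma cy_pos (i : ℕ) : 0 < cy i := by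
  have := Nat.pow_pos (n := i+2) (show 0 < i+2 by omega)
  unfold cy; positivity
lemma ln_pos (i : ℕ) : 0 < ln i := Nat.mul_pos (Rf_pos _ _) (cy_pos _)

lemma sA_lt_succ (i : ℕ) : sA i < sA (i+1) := by
  rw [sA_succ]; have := ln_pos i; omega

lemma sA_mono : StrictMono sA := strictMono_nat_of_lt_succ sA_lt_succ

lemma le_sA (i : ℕ) : i ≤ sA i := by
  induction i with
  | zero => simp [sA]
  | succ n ih => have := sA_lt_succ n; omega

lemma exists_idx (t : ℕ) : ∃ i, t < sA (i+1) :=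
  ⟨t, lt_of_lt_of_le (Nat.lt_succ_self t) (le_sA (t+1))⟩

def idx (t : ℕ) : ℕ := Nat.find (exists_idx t)

lemma idx_spec2 (t : ℕ) : t < sA (idx t + 1) := Nat.find_spec (exists_idx t)

lemma idx_spec1 (t : ℕ) : sA (idx t) ≤ t := by
  rcases Nat.eq_zero_or_pos (idx t) with h | h
  · rw [h]; simp [sA]
  · have := Nat.find_min (exists_idx t) (show idx t - 1 < idx t by omega)
    have h2 : ¬ t < sA (idx t - 1 + 1) := this
    have : idx t - 1 + 1 = idx t := by omega
    rw [this] at h2; omega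

lemma idx_eq (i o : ℕ) (ho : o < ln i) : idx (sA i + o) = i := by
  set t := sA i + o with ht
  have h1 : sA (idx t) ≤ t := idx_spec1 t
  have h2 : t < sA (idx t + 1) := idx_spec2 t
  have h3 : t < sA (i+1) := by rw [sA_succ]; omega
  by_contra hne
  rcases Nat.lt_or_ge (idx t) i with h | h
  · have : idx t + 1 ≤ i := by omega
    have := sA_mono.monotone this
    omega
  · have : i + 1 ≤ idx t := by omega
    have := sA_mono.monotone this
    omega

def qof (i o : ℕ) : ℕ := if o % (4*(i+2)) < i+2 then i+2 else Mb i
def eof (i o : ℕ) : ℕ :=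
  if o % (4*(i+2)) < i+2 then
    ((o / (4*(i+2))) % (i+2)^(i+2)) / (i+2)^(o % (4*(i+2))) % (i+2)
  else i+2

def qq (n : ℕ) : ℕ := if n = 0 then 2 else qof (idx (n-1)) ((n-1) - sA (idx (n-1)))
def EE (n : ℕ) : ℕ := if n = 0 then 0 else eof (idx (n-1)) ((n-1) - sA (idx (n-1)))

lemma qq_eq (i o : ℕ) (ho : o < ln i) : qq (sA i + o + 1) = qof i o := by
  unfold qq
  simp only [Nat.add_sub_cancel, if_neg (Nat.succ_ne_zero _), idx_eq i o ho,
    Nat.add_sub_cancel_left]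

lemma EE_eq (i o : ℕ) (ho : o < ln i) : EE (sA i + o + 1) = eof i o := by
  unfold EE
  simp only [Nat.add_sub_cancel, if_neg (Nat.succ_ne_zero _), idx_eq i o ho,
    Nat.add_sub_cancel_left]

lemma Mb_ge (i : ℕ) : ln i + 2 ≤ Mb i := by
  unfold Mb; rw [sA_succ]; omega

lemma cy_ge (i : ℕ) : 4*(i+2) * 1 ≤ cy i := by
  unfold cy
  exact Nat.mul_le_mul_left _ (Nat.one_le_pow _ _ (by omega))

lemma ln_ge (i : ℕ) : 4*(i+2) ≤ ln i := by
  have h1 := cy_ge i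
  have h2 := Rf_pos (sA i) i
  calc 4*(i+2) = 1 * (4*(i+2)*1) := by ring
  _ ≤ Rf (sA i) i * cy i := Nat.mul_le_mul h2 (cy_ge i)
  _ = ln i := rfl

lemma dvd_ln (i : ℕ) : (4*(i+2)) ∣ ln i := ⟨Rf (sA i) i * (i+2)^(i+2), by unfold ln cy; ring⟩

lemma unit_room (i o : ℕ) (ho : o < ln i) : 4*(i+2) * (o / (4*(i+2))) + 4*(i+2) ≤ ln i := by
  set D := 4*(i+2) with hD
  have hDpos : 0 < D := by omega
  have h1 : o / D < ln i / D := Nat.div_lt_div_of_lt_of_dvd (dvd_ln i) ho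
  have h2 : o / D + 1 ≤ ln i / D := h1
  calc D * (o/D) + D = D * (o/D + 1) := by ring
  _ ≤ D * (ln i / D) := Nat.mul_le_mul_left _ h2
  _ = ln i := Nat.mul_div_cancel' (dvd_ln i)

lemma qq_ge (n : ℕ) (hn : 1 ≤ n) : 2 ≤ qq n := by
  unfold qq
  rw [if_neg (by omega)]
  unfold qof
  split
  · omega
  · have := Mb_ge (idx (n-1)); have := ln_pos (idx (n-1)); omega

lemma EE_lt (n : ℕ) (hn : 1 ≤ n) : EE n < qq n := by
  unfold qq EE
  rw [if_neg (by omega), if_neg (by omega)]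
  unfold qof eof
  set i := idx (n-1)
  split
  · exact Nat.mod_lt _ (by omega)
  · have := Mb_ge i; have := ln_ge i; omega

open St9X

lemma one_le_prod_real {s : Finset ℕ} {f : ℕ → ℝ} (h : ∀ i ∈ s, 1 ≤ f i) :
    1 ≤ ∏ i ∈ s, f i := by
  calc (1:ℝ) = ∏ i ∈ s, 1 := by simp
  _ ≤ ∏ i ∈ s, f i := Finset.prod_le_prod (by intros; norm_num) h

lemma single_le_prod_real {s : Finset ℕ} {f : ℕ → ℝ} (h : ∀ i ∈ s, 1 ≤ f i)
    {j : ℕ} (hj : j ∈ s) : f j ≤ ∏ i ∈ s, f i := by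
  rw [← Finset.mul_prod_erase s f hj]
  have h1 : 1 ≤ ∏ i ∈ s.erase j, f i :=
    one_le_prod_real (fun i hi => h i (Finset.mem_of_mem_erase hi))
  have h0 : 0 ≤ f j := le_trans zero_le_one (h j hj)
  exact le_mul_of_one_le_right h0 h1

lemma frame_digit (i o s k : ℕ) (ho : o < ln i) (hcond : o % (4*(i+2)) + k ≤ i+2) (hs : s < k) :
    EE (sA i + o + 1 + s) = ((o/(4*(i+2))) % (i+2)^(i+2)) / (i+2)^(o%(4*(i+2)) + s) % (i+2)
      ∧ qq (sA i + o + 1 + s) = i+2 := by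
  have hDpos : 0 < 4*(i+2) := by omega
  have hdm := Nat.div_add_mod o (4*(i+2))
  have hmc := Nat.mul_comm (4*(i+2)) (o / (4*(i+2)))
  have hps : o % (4*(i+2)) + s < i+2 := by omega
  have hosdiv : (o + s) / (4*(i+2)) = o / (4*(i+2)) := by
    rw [show o + s = (o % (4*(i+2)) + s) + (o / (4*(i+2))) * (4*(i+2)) by omega,
      Nat.add_mul_div_right _ _ hDpos, Nat.div_eq_of_lt (by omega), Nat.zero_add]
  have hosmod : (o + s) % (4*(i+2)) = o % (4*(i+2)) + s := by
    rw [show o + s = (o % (4*(i+2)) + s) + (o / (4*(i+2))) * (4*(i+2)) by omega,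
      Nat.add_mul_mod_self_right, Nat.mod_eq_of_lt (by omega)]
  have hroom := unit_room i o ho
  have hos : o + s < ln i := by omega
  have e1 : sA i + o + 1 + s = sA i + (o+s) + 1 := by omega
  rw [e1, EE_eq i (o+s) hos, qq_eq i (o+s) hos]
  unfold eof qof
  rw [if_pos (by rw [hosmod]; omega), if_pos (by rw [hosmod]; omega), hosmod, hosdiv]
  exact ⟨rfl, rfl⟩

lemma bpos_digit (i o : ℕ) (ho : o < ln i) (hB : ¬ (o % (4*(i+2)) < i+2)) :
    EE (sA i + o + 1) = i+2 ∧ qq (sA i + o + 1) = Mb i := by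
  rw [EE_eq i o ho, qq_eq i o ho]
  unfold eof qof
  rw [if_neg hB, if_neg hB]
  exact ⟨rfl, rfl⟩

lemma marker (i o k : ℕ) (ho : o < ln i) (hk : 1 ≤ k) (hcond : ¬ (o % (4*(i+2)) + k ≤ i+2)) :
    ∃ s, s < k ∧ EE (sA i + o + 1 + s) = i+2 ∧ qq (sA i + o + 1 + s) = Mb i := by
  have hDpos : 0 < 4*(i+2) := by omega
  have hmlt : o % (4*(i+2)) < 4*(i+2) := Nat.mod_lt _ hDpos
  by_cases hp : o % (4*(i+2)) < i+2
  · refine ⟨i+2 - o % (4*(i+2)), by omega, ?_⟩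
    have hdm := Nat.div_add_mod o (4*(i+2))
    have hmc := Nat.mul_comm (4*(i+2)) (o / (4*(i+2)))
    have hosmod : (o + (i+2 - o % (4*(i+2)))) % (4*(i+2)) = i+2 := by
      rw [show o + (i+2 - o % (4*(i+2))) = (i+2) + (o / (4*(i+2))) * (4*(i+2)) by omega,
        Nat.add_mul_mod_self_right, Nat.mod_eq_of_lt (by omega)]
    have hroom := unit_room i o ho
    have hos : o + (i+2 - o % (4*(i+2))) < ln i := by omega
    have e1 : sA i + o + 1 + (i+2 - o % (4*(i+2))) = sA i + (o + (i+2 - o % (4*(i+2)))) + 1 := by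
      omega
    rw [e1]
    exact bpos_digit i _ hos (by rw [hosmod]; omega)
  · refine ⟨0, by omega, ?_⟩
    have e1 : sA i + o + 1 + 0 = sA i + o + 1 := by omega
    rw [e1]
    exact bpos_digit i o ho hp

lemma list_eq_iff_pointwise (k : ℕ) (fn : ℕ → ℕ) (B : List ℕ) (hlen : B.length = k) :
    ((List.range k).map fn = B) ↔ ∀ s, s < k → fn s = B.getD s 0 := by
  constructor
  · intro h s hs
    have hs' : s < ((List.range k).map fn).length := by simpa using hs
    have := List.getElem_of_eq h hs'
    simp only [List.getElem_map, List.getElem_range] at this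
    rw [this, List.getD_eq_getElem B 0 (by omega)]
  · intro h
    apply List.ext_getElem (by simpa using hlen.symm)
    intro s h1 h2
    simp only [List.getElem_map, List.getElem_range]
    rw [h s (by simpa using h1), List.getD_eq_getElem B 0 (by omega)]

lemma match_iff (i k : ℕ) (B : List ℕ) (hlen : B.length = k) (hk : 1 ≤ k)
    (hent : ∀ t, t < k → B.getD t 0 < i+2) (o : ℕ) (ho : o < ln i) :
    ((List.range k).map (fun s => EE (sA i + o + 1 + s)) = B)
      ↔ PhiX (i+2) k (∑ t ∈ Finset.range k, B.getD t 0 * (i+2)^t) o := by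
  rw [list_eq_iff_pointwise k _ B hlen]
  by_cases hcond : o % (4*(i+2)) + k ≤ i+2
  · have hframe : ∀ s, s < k → EE (sA i + o + 1 + s)
        = ((o/(4*(i+2))) % (i+2)^(i+2)) / (i+2)^(o%(4*(i+2)) + s) % (i+2) :=
      fun s hs => (frame_digit i o s k ho hcond hs).1
    have hwin := window_iff (i+2) k (o % (4*(i+2))) (by omega) (fun t => B.getD t 0) hent
      (((o/(4*(i+2))) % (i+2)^(i+2)))
    constructor
    · intro h
      refine ⟨hcond, hwin.mp ?_⟩
      intro t ht
      rw [← hframe t ht]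
      exact h t ht
    · intro hx s hs
      rw [hframe s hs]
      exact hwin.mpr hx.2 s hs
  · constructor
    · intro h
      obtain ⟨s, hs, hE, _⟩ := marker i o k ho hk hcond
      have := h s hs
      have := hent s hs
      omega
    · intro hx
      exact absurd hx.1 hcond

noncomputable def fq (k t : ℕ) : ℝ := (∏ s ∈ Finset.range k, (qq (t+1+s) : ℝ))⁻¹
noncomputable def gN (k : ℕ) (B : List ℕ) (t : ℕ) : ℝ :=
  if (List.range k).map (fun s => EE (t+1+s)) = B then 1 else 0

lemma one_le_qq_real (n : ℕ) (hn : 1 ≤ n) : (1:ℝ) ≤ (qq n : ℝ) := by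
  have := qq_ge n hn
  exact_mod_cast (by omega : 1 ≤ qq n)

lemma fq_nonneg (k t : ℕ) : 0 ≤ fq k t := by
  unfold fq
  apply inv_nonneg.mpr
  apply Finset.prod_nonneg
  intro s _
  positivity

lemma fq_le_one (k t : ℕ) : fq k t ≤ 1 := by
  unfold fq
  have h1 : (1:ℝ) ≤ ∏ s ∈ Finset.range k, (qq (t+1+s) : ℝ) :=
    one_le_prod_real (fun s _ => one_le_qq_real _ (by omega))
  calc (∏ s ∈ Finset.range k, (qq (t+1+s) : ℝ))⁻¹ ≤ 1⁻¹ := inv_anti₀ (by norm_num) h1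
  _ = 1 := inv_one

lemma qtermA (i o k : ℕ) (ho : o < ln i) (hcond : o % (4*(i+2)) + k ≤ i+2) :
    fq k (sA i + o) = (((i+2)^k : ℕ) : ℝ)⁻¹ := by
  unfold fq
  congr 1
  have h : ∀ s ∈ Finset.range k, (qq (sA i + o + 1 + s) : ℝ) = ((i+2 : ℕ) : ℝ) := by
    intro s hs
    rw [(frame_digit i o s k ho hcond (Finset.mem_range.mp hs)).2]
  rw [Finset.prod_congr rfl h, Finset.prod_const, Finset.card_range]
  push_cast
  ring

lemma qtermB (i o k : ℕ) (ho : o < ln i) (hk : 1 ≤ k)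
    (hcond : ¬ (o % (4*(i+2)) + k ≤ i+2)) :
    fq k (sA i + o) ≤ ((Mb i : ℕ) : ℝ)⁻¹ := by
  obtain ⟨s, hs, _, hqm⟩ := marker i o k ho hk hcond
  have hprod : ((Mb i : ℕ) : ℝ) ≤ ∏ u ∈ Finset.range k, (qq (sA i + o + 1 + u) : ℝ) := by
    have h2 := single_le_prod_real (f := fun u => (qq (sA i + o + 1 + u) : ℝ))
      (fun j _ => one_le_qq_real _ (by omega)) (Finset.mem_range.mpr hs)
    rw [hqm] at h2
    exact h2
  have hMpos : (0:ℝ) < ((Mb i : ℕ) : ℝ) := by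
    have := Mb_ge i; have := ln_pos i
    exact_mod_cast (by omega : 0 < Mb i)
  unfold fq
  exact inv_anti₀ hMpos hprod


lemma chunk_bound (k : ℕ) (B : List ℕ) (hlen : B.length = k) (hk : 1 ≤ k)
    (i : ℕ) (hkm : k ≤ i+2) (hent : ∀ t, t < k → B.getD t 0 < i+2)
    (T : ℕ) (hT1 : sA i ≤ T) (hT2 : T ≤ sA (i+1)) :
    |∑ t ∈ Finset.Ico (sA i) T, (gN k B t - fq k t)|
      ≤ (((i+2)^((i+2)-k) * ((i+2)-k+1) : ℕ) : ℝ) + 1 := by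
  have hTle : T - sA i ≤ ln i := by have := sA_succ i; omega
  rw [Finset.sum_Ico_eq_sum_range]
  set T' := T - sA i with hT'def
  set v := ∑ t ∈ Finset.range k, B.getD t 0 * (i+2)^t with hv
  set c : ℕ := (i+2)^((i+2)-k) * ((i+2)-k+1) with hc
  set P : ℕ := (i+2)^(i+2)*(4*(i+2)) with hP
  have hPpos : 0 < P := by
    have : 0 < (i+2)^(i+2) := Nat.pow_pos (by omega)
    positivity
  have hg : ∀ o ∈ Finset.range T', gN k B (sA i + o) = if PhiX (i+2) k v o then (1:ℝ) else 0 := by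
    intro o hoT
    have ho : o < ln i := lt_of_lt_of_le (Finset.mem_range.mp hoT) hTle
    unfold gN
    exact if_congr (match_iff i k B hlen hk hent o ho) rfl rfl
  have hsplit : ∑ o ∈ Finset.range T', (gN k B (sA i + o) - fq k (sA i + o))
      = (∑ o ∈ Finset.range T', gN k B (sA i + o))
        - ∑ o ∈ Finset.range T', fq k (sA i + o) := Finset.sum_sub_distrib _ _
  have hgsum : ∑ o ∈ Finset.range T', gN k B (sA i + o)
      = (((Finset.range T').filter (PhiX (i+2) k v)).card : ℝ) := by
    rw [Finset.sum_congr rfl hg, Finset.sum_boole]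
  have hfsum : ∑ o ∈ Finset.range T', fq k (sA i + o)
      = (((Finset.range T').filter (PhiW (i+2) k)).card : ℝ) * ((((i+2)^k : ℕ) : ℝ))⁻¹
        + ∑ o ∈ (Finset.range T').filter (fun o => ¬ PhiW (i+2) k o), fq k (sA i + o) := by
    rw [← Finset.sum_filter_add_sum_filter_not (Finset.range T') (PhiW (i+2) k)
      (fun o => fq k (sA i + o))]
    congr 1
    have hA : ∀ o ∈ (Finset.range T').filter (PhiW (i+2) k),
        fq k (sA i + o) = (((i+2)^k : ℕ) : ℝ)⁻¹ := by
      intro o hoF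
      have hmem := Finset.mem_filter.mp hoF
      have ho : o < ln i := lt_of_lt_of_le (Finset.mem_range.mp hmem.1) hTle
      have hcond : o % (4*(i+2)) + k ≤ i+2 := hmem.2
      exact qtermA i o k ho hcond
    rw [Finset.sum_congr rfl hA, Finset.sum_const, nsmul_eq_mul]
  -- counting bounds
  have hv_lt : v < (i+2)^k := sum_digits_lt (i+2) k (by omega) _ hent
  have hperX : ∀ x r, r < P → (PhiX (i+2) k v (x*P + r) ↔ PhiX (i+2) k v r) := by
    intro x r hr
    have h := PhiX_periodic (i+2) k v (by omega) x r
      (by rw [hP, mul_comm] at hr; exact hr)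
    rw [hP, show (i+2)^(i+2)*(4*(i+2)) = 4*(i+2)*(i+2)^(i+2) from mul_comm _ _]
    exact h
  have hperW : ∀ x r, r < P → (PhiW (i+2) k (x*P + r) ↔ PhiW (i+2) k r) := by
    intro x r hr
    have h := PhiW_periodic (i+2) k x r (by rw [hP, mul_comm] at hr; exact hr)
    rw [hP, show (i+2)^(i+2)*(4*(i+2)) = 4*(i+2)*(i+2)^(i+2) from mul_comm _ _]
    exact h
  have hcX := count_bounds P c T' hPpos (PhiX (i+2) k v) hperX
    (count_PhiX (i+2) k v (by omega) hkm hv_lt)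
  have hcW := count_bounds P ((i+2)^(i+2)*((i+2)-k+1)) T' hPpos (PhiW (i+2) k) hperW
    (count_PhiW (i+2) k (by omega) hkm)
  obtain ⟨hX1, hX2⟩ := hcX
  obtain ⟨hW1, hW2⟩ := hcW
  have hWX : (i+2)^(i+2)*((i+2)-k+1) = c * (i+2)^k := by
    rw [hc, show (i+2)^(i+2) = (i+2)^((i+2)-k) * (i+2)^k by rw [← pow_add]; congr 1; omega]
    ring
  -- real arithmetic
  set Xr : ℝ := (((Finset.range T').filter (PhiX (i+2) k v)).card : ℝ) with hXr
  set Wr : ℝ := (((Finset.range T').filter (PhiW (i+2) k)).card : ℝ) with hWr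
  set qr : ℝ := (((i+2)^k : ℕ) : ℝ) with hqr
  set cr : ℝ := (c : ℝ) with hcr
  set Fr : ℝ := ((T' / P : ℕ) : ℝ) with hFr
  have hqpos : (0:ℝ) < qr := by
    rw [hqr]
    exact_mod_cast Nat.pow_pos (by omega)
  have hXr1 : Fr * cr ≤ Xr := by rw [hXr, hFr, hcr]; exact_mod_cast hX1
  have hXr2 : Xr ≤ Fr * cr + cr := by rw [hXr, hFr, hcr]; exact_mod_cast hX2
  have hWr1 : Fr * (cr * qr) ≤ Wr := by
    rw [hWr, hFr, hcr, hqr]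
    rw [hWX] at hW1
    exact_mod_cast hW1
  have hWr2 : Wr ≤ Fr * (cr * qr) + cr * qr := by
    rw [hWr, hFr, hcr, hqr]
    rw [hWX] at hW2
    exact_mod_cast hW2
  have hWq : (Wr * qr⁻¹) * qr = Wr := by field_simp
  have hu1 : Fr * cr ≤ Wr * qr⁻¹ := by
    rw [← mul_le_mul_iff_of_pos_right hqpos, hWq]
    calc Fr * cr * qr = Fr * (cr * qr) := by ring
    _ ≤ Wr := hWr1
  have hu2 : Wr * qr⁻¹ ≤ Fr * cr + cr := by
    rw [← mul_le_mul_iff_of_pos_right hqpos, hWq]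
    calc Wr ≤ Fr * (cr * qr) + cr * qr := hWr2
    _ = (Fr * cr + cr) * qr := by ring
  -- remainder bound
  set r : ℝ := ∑ o ∈ (Finset.range T').filter (fun o => ¬ PhiW (i+2) k o), fq k (sA i + o)
    with hr
  have hr0 : 0 ≤ r := Finset.sum_nonneg (fun o _ => fq_nonneg _ _)
  have hr1 : r ≤ 1 := by
    have hMpos : (0:ℝ) < ((Mb i : ℕ) : ℝ) := by
      have := Mb_ge i; have := ln_pos i
      exact_mod_cast (by omega : 0 < Mb i)
    have hstep : r ≤ (((Finset.range T').filter (fun o => ¬ PhiW (i+2) k o)).card : ℝ)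
        * ((Mb i : ℕ) : ℝ)⁻¹ := by
      rw [hr]
      calc ∑ o ∈ (Finset.range T').filter (fun o => ¬ PhiW (i+2) k o), fq k (sA i + o)
          ≤ ∑ o ∈ (Finset.range T').filter (fun o => ¬ PhiW (i+2) k o), ((Mb i : ℕ) : ℝ)⁻¹ := by
            apply Finset.sum_le_sum
            intro o hoF
            have hmem := Finset.mem_filter.mp hoF
            have ho : o < ln i := lt_of_lt_of_le (Finset.mem_range.mp hmem.1) hTle
            exact qtermB i o k ho hk hmem.2
      _ = _ := by rw [Finset.sum_const, nsmul_eq_mul]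
    have hcard : (((Finset.range T').filter (fun o => ¬ PhiW (i+2) k o)).card : ℝ)
        ≤ ((Mb i : ℕ) : ℝ) := by
      have h1 : ((Finset.range T').filter (fun o => ¬ PhiW (i+2) k o)).card ≤ T' :=
        le_trans (Finset.card_filter_le _ _) (le_of_eq (Finset.card_range T'))
      have h2 : T' ≤ Mb i := by have := Mb_ge i; omega
      exact_mod_cast le_trans h1 h2
    calc r ≤ (((Finset.range T').filter (fun o => ¬ PhiW (i+2) k o)).card : ℝ)
        * ((Mb i : ℕ) : ℝ)⁻¹ := hstep
    _ ≤ ((Mb i : ℕ) : ℝ) * ((Mb i : ℕ) : ℝ)⁻¹ := by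
        apply mul_le_mul_of_nonneg_right hcard (by positivity)
    _ = 1 := by field_simp
  -- assemble
  rw [hsplit, hgsum, hfsum]
  have heq : Xr - (Wr * qr⁻¹ + r) = (Xr - Wr * qr⁻¹) - r := by ring
  calc |Xr - (Wr * qr⁻¹ + r)| = |(Xr - Wr * qr⁻¹) - r| := by rw [heq]
  _ ≤ |Xr - Wr * qr⁻¹| + |r| := abs_sub _ _
  _ ≤ cr + 1 := by
      apply add_le_add
      · exact abs_le.mpr ⟨by linarith, by linarith⟩
      · rw [abs_of_nonneg hr0]; exact hr1


lemma chunk_bound_triv (k : ℕ) (B : List ℕ) (a T : ℕ) :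
    |∑ t ∈ Finset.Ico a T, (gN k B t - fq k t)| ≤ ((T - a : ℕ) : ℝ) := by
  calc |∑ t ∈ Finset.Ico a T, (gN k B t - fq k t)|
      ≤ ∑ t ∈ Finset.Ico a T, |gN k B t - fq k t| := Finset.abs_sum_le_sum_abs _ _
  _ ≤ ∑ t ∈ Finset.Ico a T, 1 := by
      apply Finset.sum_le_sum
      intro t _
      have h1 := fq_nonneg k t
      have h2 := fq_le_one k t
      unfold gN
      split <;> (rw [abs_le]; constructor <;> linarith)
  _ = ((T - a : ℕ) : ℝ) := by rw [Finset.sum_const, Nat.card_Ico, nsmul_eq_mul, mul_one]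

lemma sum_chunks (d : ℕ → ℝ) : ∀ i n, n ≤ sA (i+1) →
    ∑ t ∈ Finset.range n, d t
      = ∑ j ∈ Finset.range (i+1), ∑ t ∈ Finset.Ico (sA j) (min n (sA (j+1))), d t := by
  intro i
  induction i with
  | zero =>
    intro n hn
    rw [Finset.sum_range_one, min_eq_left hn, show sA 0 = 0 from rfl, Finset.range_eq_Ico]
  | succ i ih =>
    intro n hn
    by_cases hcase : n ≤ sA (i+1)
    · rw [Finset.sum_range_succ, ← ih n hcase]
      have hempty : Finset.Ico (sA (i+1)) (min n (sA (i+1+1))) = ∅ := by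
        apply Finset.Ico_eq_empty
        simp only [not_lt]
        exact le_trans (min_le_left _ _) hcase
      rw [hempty, Finset.sum_empty, add_zero]
    · push_neg at hcase
      rw [Finset.sum_range_succ]
      have h1 : ∑ t ∈ Finset.range n, d t
          = ∑ t ∈ Finset.range (sA (i+1)), d t + ∑ t ∈ Finset.Ico (sA (i+1)) n, d t := by
        rw [Finset.range_eq_Ico, Finset.range_eq_Ico]
        exact (Finset.sum_Ico_consecutive (f := d) (Nat.zero_le _) (le_of_lt hcase)).symm
      rw [h1, ih (sA (i+1)) (le_refl _)]
      congr 1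
      · apply Finset.sum_congr rfl
        intro j hj
        simp only [Finset.mem_range] at hj
        have hj1 : sA (j+1) ≤ sA (i+1) := sA_mono.monotone (by omega)
        rw [min_eq_right hj1, min_eq_right (by omega)]
      · rw [min_eq_left hn]

lemma idx_ge (t i : ℕ) (h : sA i ≤ t) : i ≤ idx t := by
  by_contra hc
  push_neg at hc
  have h1 : idx t + 1 ≤ i := by omega
  have := sA_mono.monotone h1
  have := idx_spec2 t
  omega

lemma Icc_one_eq_map (n : ℕ) :
    Finset.Icc 1 n = (Finset.range n).map ⟨fun t => t+1, fun a b h => by simpa using h⟩ := by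
  ext j
  simp only [Finset.mem_Icc, Finset.mem_map, Finset.mem_range, Function.Embedding.coeFn_mk]
  constructor
  · intro h; exact ⟨j-1, by omega, by show j - 1 + 1 = j; omega⟩
  · rintro ⟨t, ht, rfl⟩; show 1 ≤ t + 1 ∧ t + 1 ≤ n; omega

lemma QNkG_eq (k n : ℕ) : QNkG qq k n = ∑ t ∈ Finset.range n, fq k t := by
  unfold QNkG
  rw [Icc_one_eq_map, Finset.sum_map]
  apply Finset.sum_congr rfl
  intro t _
  unfold fq
  rfl

lemma NQG_eq (k : ℕ) (B : List ℕ) (hlen : B.length = k) (n : ℕ) :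
    (NQG EE B n : ℝ) = ∑ t ∈ Finset.range n, gN k B t := by
  unfold NQG
  rw [hlen, Icc_one_eq_map, Finset.filter_map, Finset.card_map]
  rw [eq_comm]
  unfold gN
  rw [Finset.sum_boole]
  congr 1

lemma Q_lower (k : ℕ) (hk : 1 ≤ k) (j n : ℕ) (hkm : k ≤ j+2) (hn : sA (j+1) ≤ n) :
    ((Rf (sA j) j : ℕ) : ℝ) ≤ ∑ t ∈ Finset.range n, fq k t := by
  have hsub : Finset.Ico (sA j) (sA (j+1)) ⊆ Finset.range n := by
    intro t ht
    simp only [Finset.mem_Ico] at ht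
    simp only [Finset.mem_range]
    omega
  have h1 : ∑ t ∈ Finset.Ico (sA j) (sA (j+1)), fq k t ≤ ∑ t ∈ Finset.range n, fq k t :=
    Finset.sum_le_sum_of_subset_of_nonneg hsub (fun t _ _ => fq_nonneg k t)
  refine le_trans ?_ h1
  rw [Finset.sum_Ico_eq_sum_range]
  have hlen' : sA (j+1) - sA j = ln j := by rw [sA_succ]; omega
  rw [hlen']
  have h2 : ∑ o ∈ (Finset.range (ln j)).filter (PhiW (j+2) k), fq k (sA j + o)
      ≤ ∑ o ∈ Finset.range (ln j), fq k (sA j + o) :=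
    Finset.sum_le_sum_of_subset_of_nonneg (Finset.filter_subset _ _)
      (fun t _ _ => fq_nonneg _ _)
  refine le_trans ?_ h2
  have hA : ∀ o ∈ (Finset.range (ln j)).filter (PhiW (j+2) k),
      fq k (sA j + o) = (((j+2)^k : ℕ) : ℝ)⁻¹ := by
    intro o hoF
    have hmem := Finset.mem_filter.mp hoF
    exact qtermA j o k (Finset.mem_range.mp hmem.1) hmem.2
  rw [Finset.sum_congr rfl hA, Finset.sum_const, nsmul_eq_mul]
  -- exact count over the full stretch
  have hperW : ∀ x r, r < (j+2)^(j+2)*(4*(j+2)) →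
      (PhiW (j+2) k (x*((j+2)^(j+2)*(4*(j+2))) + r) ↔ PhiW (j+2) k r) := by
    intro x r hr
    have h := PhiW_periodic (j+2) k x r (by rw [mul_comm] at hr; exact hr)
    rw [show (j+2)^(j+2)*(4*(j+2)) = 4*(j+2)*(j+2)^(j+2) from mul_comm _ _]
    exact h
  have hlnP : ln j = Rf (sA j) j * ((j+2)^(j+2)*(4*(j+2))) := by
    unfold ln cy
    rw [show 4*(j+2)*(j+2)^(j+2) = (j+2)^(j+2)*(4*(j+2)) from mul_comm _ _]
  have hcount : ((Finset.range (ln j)).filter (PhiW (j+2) k)).card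
      = Rf (sA j) j * ((j+2)^(j+2)*((j+2)-k+1)) := by
    rw [hlnP]
    exact count_mul_of_periodic _ _ _ _ hperW (count_PhiW (j+2) k (by omega) hkm)
  rw [hcount]
  -- (Rf : ℝ) ≤ Rf * (m^m*(m-k+1)) * (m^k)⁻¹
  have hqpos : (0:ℝ) < (((j+2)^k : ℕ) : ℝ) := by
    exact_mod_cast Nat.pow_pos (by omega)
  rw [← mul_le_mul_iff_of_pos_right hqpos]
  have hcancel : (↑(Rf (sA j) j * ((j+2)^(j+2)*((j+2)-k+1))) : ℝ) * (((j+2)^k : ℕ) : ℝ)⁻¹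
      * (((j+2)^k : ℕ) : ℝ) = (↑(Rf (sA j) j * ((j+2)^(j+2)*((j+2)-k+1))) : ℝ) := by
    exact inv_mul_cancel_right₀ (ne_of_gt hqpos) _
  rw [hcancel]
  have hnat : Rf (sA j) j * (j+2)^k ≤ Rf (sA j) j * ((j+2)^(j+2)*((j+2)-k+1)) := by
    apply Nat.mul_le_mul_left
    calc (j+2)^k ≤ (j+2)^(j+2) := Nat.pow_le_pow_right (by omega) hkm
    _ = (j+2)^(j+2) * 1 := by ring
    _ ≤ (j+2)^(j+2)*((j+2)-k+1) := Nat.mul_le_mul_left _ (by omega)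
  exact_mod_cast hnat


lemma sum_ln (i0 : ℕ) : ∑ j ∈ Finset.range i0, ln j = sA i0 := by
  induction i0 with
  | zero => simp [sA]
  | succ i0 ih => rw [Finset.sum_range_succ, ih, sA_succ]

lemma pow_sq_aux (i : ℕ) : i+3 ≤ (i+2)^2 := by
  have h : (i+2)^2 = i*i + 4*i + 4 := by ring
  have h2 : 0 ≤ i*i := Nat.zero_le _
  omega

set_option maxHeartbeats 2000000 in
lemma qnormal : QNormal qq EE := by
  intro k hk B hlen
  set i0 : ℕ := B.sum + k + 1 with hi0
  have hent_all : ∀ i, i0 ≤ i → ∀ t, t < k → B.getD t 0 < i+2 := by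
    intro i hi t ht
    have hmem : t < B.length := by omega
    have hget : B.getD t 0 = B[t]'hmem := List.getD_eq_getElem B 0 hmem
    have hle : B[t]'hmem ≤ B.sum :=
      List.single_le_sum (fun x _ => Nat.zero_le x) _ (List.getElem_mem hmem)
    omega
  rw [Metric.tendsto_atTop]
  intro ε hε
  obtain ⟨L, hL⟩ := exists_nat_gt (((sA i0 : ℝ) + 1)/ε)
  have hLpos : 0 < L := by
    by_contra hc
    push_neg at hc
    interval_cases L
    have h1 : (0:ℝ) < ((sA i0 : ℝ) + 1)/ε := by positivity
    linarith
  refine ⟨sA (i0 + L + 2) + 1, ?_⟩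
  intro n hn
  have hn1 : 1 ≤ n := by omega
  set t0 := n - 1 with ht0
  set i := idx t0 with hi
  have hti : sA (i0 + L + 2) ≤ t0 := by omega
  have hige : i0 + L + 2 ≤ i := idx_ge t0 _ hti
  have hi1 : 1 ≤ i := by omega
  have hki : k ≤ i0 := by omega
  have hnle : n ≤ sA (i+1) := by
    have h := idx_spec2 t0
    rw [← hi] at h
    omega
  have hsin : sA i ≤ t0 := idx_spec1 t0
  have hsin' : sA i < n := by omega
  -- conversion
  have hQeq : QNkG qq k n = ∑ t ∈ Finset.range n, fq k t := QNkG_eq k n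
  have hNeq : (NQG EE B n : ℝ) = ∑ t ∈ Finset.range n, gN k B t := NQG_eq k B hlen n
  -- decomposition into chunks
  have hdecomp := sum_chunks (fun t => gN k B t - fq k t) i n hnle
  have hNQ : (NQG EE B n : ℝ) - QNkG qq k n
      = ∑ j ∈ Finset.range (i+1), ∑ t ∈ Finset.Ico (sA j) (min n (sA (j+1))),
          (gN k B t - fq k t) := by
    rw [hNeq, hQeq, ← Finset.sum_sub_distrib, hdecomp]
  -- bound each chunk
  have hchunk_low : ∀ j ∈ Finset.range i0,
      |∑ t ∈ Finset.Ico (sA j) (min n (sA (j+1))), (gN k B t - fq k t)| ≤ ((ln j : ℕ) : ℝ) := by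
    intro j _
    refine le_trans (chunk_bound_triv k B _ _) ?_
    have : min n (sA (j+1)) - sA j ≤ ln j := by
      have := sA_succ j
      have := min_le_right n (sA (j+1))
      omega
    exact_mod_cast this
  have hchunk_hi : ∀ j ∈ Finset.Ico i0 (i+1),
      |∑ t ∈ Finset.Ico (sA j) (min n (sA (j+1))), (gN k B t - fq k t)|
        ≤ (((i+3)^(i+3) : ℕ) : ℝ) + 1 := by
    intro j hj
    simp only [Finset.mem_Ico] at hj
    have hjle : j ≤ i := by omega
    have hbnd := chunk_bound k B hlen hk j (by omega) (hent_all j hj.1)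
      (min n (sA (j+1)))
      (by
        have h1 : sA j ≤ sA i := sA_mono.monotone hjle
        have h2 : sA j ≤ sA (j+1) := le_of_lt (sA_lt_succ j)
        omega)
      (min_le_right _ _)
    refine le_trans hbnd ?_
    have hnat : (j+2)^((j+2)-k) * ((j+2)-k+1) ≤ (i+3)^(i+3) := by
      calc (j+2)^((j+2)-k) * ((j+2)-k+1) ≤ (j+2)^(j+2) * (i+3) := by
            apply Nat.mul_le_mul
            · exact Nat.pow_le_pow_right (by omega) (by omega)
            · omega
      _ ≤ (i+3)^(i+2) * (i+3) := by
            apply Nat.mul_le_mul_right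
            calc (j+2)^(j+2) ≤ (i+3)^(j+2) := Nat.pow_le_pow_left (by omega) _
            _ ≤ (i+3)^(i+2) := Nat.pow_le_pow_right (by omega) (by omega)
      _ = (i+3)^(i+3) := by rw [← pow_succ]
    have : (((j+2)^((j+2)-k) * ((j+2)-k+1) : ℕ) : ℝ) ≤ (((i+3)^(i+3) : ℕ) : ℝ) := by
      exact_mod_cast hnat
    linarith
  -- total error bound
  have hErr : |(NQG EE B n : ℝ) - QNkG qq k n|
      ≤ ((sA i0 : ℕ) : ℝ) + ((i+1) : ℝ) * ((((i+3)^(i+3) : ℕ) : ℝ) + 1) := by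
    rw [hNQ]
    rw [← Finset.sum_range_add_sum_Ico _ (show i0 ≤ i+1 by omega)]
    refine le_trans (abs_add_le _ _) ?_
    apply add_le_add
    · refine le_trans (Finset.abs_sum_le_sum_abs _ _) ?_
      calc ∑ j ∈ Finset.range i0, |∑ t ∈ Finset.Ico (sA j) (min n (sA (j+1))),
              (gN k B t - fq k t)|
          ≤ ∑ j ∈ Finset.range i0, ((ln j : ℕ) : ℝ) := Finset.sum_le_sum hchunk_low
      _ = ((sA i0 : ℕ) : ℝ) := by
          rw [← Nat.cast_sum]
          exact_mod_cast sum_ln i0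
    · refine le_trans (Finset.abs_sum_le_sum_abs _ _) ?_
      calc ∑ j ∈ Finset.Ico i0 (i+1), |∑ t ∈ Finset.Ico (sA j) (min n (sA (j+1))),
              (gN k B t - fq k t)|
          ≤ ∑ j ∈ Finset.Ico i0 (i+1), ((((i+3)^(i+3) : ℕ) : ℝ) + 1) :=
            Finset.sum_le_sum hchunk_hi
      _ = ((i+1-i0 : ℕ) : ℝ) * ((((i+3)^(i+3) : ℕ) : ℝ) + 1) := by
          rw [Finset.sum_const, Nat.card_Ico, nsmul_eq_mul]
      _ ≤ ((i+1) : ℝ) * ((((i+3)^(i+3) : ℕ) : ℝ) + 1) := by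
          apply mul_le_mul_of_nonneg_right
          · exact_mod_cast (by omega : i+1-i0 ≤ i+1)
          · positivity
  -- lower bound on Q
  have hQlow : ((Rf (sA (i-1)) (i-1) : ℕ) : ℝ) ≤ QNkG qq k n := by
    rw [hQeq]
    have := Q_lower k hk (i-1) n (by omega) (by rw [show i-1+1 = i by omega]; omega)
    exact this
  have hRfpos : 0 < Rf (sA (i-1)) (i-1) := Rf_pos _ _
  have hQpos : (0:ℝ) < QNkG qq k n := by
    have h1 : (0:ℝ) < ((Rf (sA (i-1)) (i-1) : ℕ) : ℝ) := by exact_mod_cast hRfpos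
    linarith
  -- numeric chain
  have hRfge : (i+2)^(3*i+27) ≤ Rf (sA (i-1)) (i-1) := by
    unfold Rf
    have hbase : i+2 ≤ sA (i-1) + (i-1) + 3 := by
      have := le_sA (i-1)
      omega
    have hexp : 3*(i-1)+30 = 3*i+27 := by omega
    rw [hexp]
    exact Nat.pow_le_pow_left hbase _
  have hA : (i+1) * ((i+3)^(i+3)+1) ≤ (i+3)^(i+5) := by
    calc (i+1) * ((i+3)^(i+3)+1) = (i+1)*(i+3)^(i+3) + (i+1)*1 := by ring
    _ ≤ (i+1)*(i+3)^(i+3) + (i+1)*(i+3)^(i+3) := by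
          apply Nat.add_le_add_left
          exact Nat.mul_le_mul_left _ (Nat.one_le_pow _ _ (by omega))
    _ = (2*(i+1)) * (i+3)^(i+3) := by ring
    _ ≤ (i+3)^2 * (i+3)^(i+3) := by
          apply Nat.mul_le_mul_right
          have h2 : (i+3)^2 = i*i+6*i+9 := by ring
          have h3 : 0 ≤ i*i := Nat.zero_le _
          omega
    _ = (i+3)^(i+5) := by rw [← pow_add]; congr 1; omega
  have hB : (i+3)^(i+5) ≤ (i+2)^(2*i+10) := by
    calc (i+3)^(i+5) ≤ ((i+2)^2)^(i+5) := Nat.pow_le_pow_left (pow_sq_aux i) _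
    _ = (i+2)^(2*(i+5)) := by rw [← pow_mul]
    _ = (i+2)^(2*i+10) := by congr 1
  have hnum : (sA i0 + (i+1) * ((i+3)^(i+3)+1)) * (i+2)
      ≤ (sA i0 + 1) * (i+2)^(3*i+27) := by
    have hpart1 : sA i0 * (i+2) ≤ sA i0 * (i+2)^(3*i+27) := by
      apply Nat.mul_le_mul_left
      calc i+2 = (i+2)^1 := by ring
      _ ≤ (i+2)^(3*i+27) := Nat.pow_le_pow_right (by omega) (by omega)
    have hpart2 : (i+1) * ((i+3)^(i+3)+1) * (i+2) ≤ (i+2)^(3*i+27) := by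
      calc (i+1) * ((i+3)^(i+3)+1) * (i+2) ≤ (i+3)^(i+5) * (i+2) :=
            Nat.mul_le_mul_right _ hA
      _ ≤ (i+2)^(2*i+10) * (i+2) := Nat.mul_le_mul_right _ hB
      _ = (i+2)^(2*i+11) := by rw [← pow_succ]
      _ ≤ (i+2)^(3*i+27) := Nat.pow_le_pow_right (by omega) (by omega)
    calc (sA i0 + (i+1) * ((i+3)^(i+3)+1)) * (i+2)
        = sA i0 * (i+2) + (i+1) * ((i+3)^(i+3)+1) * (i+2) := by ring
    _ ≤ sA i0 * (i+2)^(3*i+27) + (i+2)^(3*i+27) := Nat.add_le_add hpart1 hpart2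
    _ = (sA i0 + 1) * (i+2)^(3*i+27) := by ring
  -- final assembly
  have hfrac : dist ((NQG EE B n : ℝ) / QNkG qq k n) 1
      = |(NQG EE B n : ℝ) - QNkG qq k n| / QNkG qq k n := by
    rw [Real.dist_eq]
    rw [show (NQG EE B n : ℝ)/QNkG qq k n - 1
      = ((NQG EE B n : ℝ) - QNkG qq k n)/QNkG qq k n by field_simp]
    rw [abs_div, abs_of_pos hQpos]
  rw [hfrac]
  set Errv : ℝ := ((sA i0 : ℕ) : ℝ) + ((i+1) : ℝ) * ((((i+3)^(i+3) : ℕ) : ℝ) + 1) with hErrv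
  have hErrv_eq : Errv = ((sA i0 + (i+1) * ((i+3)^(i+3)+1) : ℕ) : ℝ) := by
    rw [hErrv]
    push_cast
    ring
  have hRfR0 : (0:ℝ) < ((Rf (sA (i-1)) (i-1) : ℕ) : ℝ) := by exact_mod_cast hRfpos
  have hstep1 : |(NQG EE B n : ℝ) - QNkG qq k n| / QNkG qq k n
      ≤ Errv / ((Rf (sA (i-1)) (i-1) : ℕ) : ℝ) := by
    apply div_le_div₀
    · rw [hErrv_eq]; exact Nat.cast_nonneg _
    · exact hErr
    · exact hRfR0
    · exact hQlow
  have hRfR : (0:ℝ) < ((Rf (sA (i-1)) (i-1) : ℕ) : ℝ) := by exact_mod_cast hRfpos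
  have hi2R : (0:ℝ) < (i:ℝ)+2 := by positivity
  have hstep2 : Errv / ((Rf (sA (i-1)) (i-1) : ℕ) : ℝ)
      ≤ (((sA i0 : ℕ) : ℝ) + 1) / ((i:ℝ)+2) := by
    rw [div_le_div_iff₀ hRfR hi2R]
    rw [hErrv_eq]
    have hchain : (sA i0 + (i+1) * ((i+3)^(i+3)+1)) * (i+2)
        ≤ (sA i0 + 1) * Rf (sA (i-1)) (i-1) :=
      le_trans hnum (Nat.mul_le_mul_left _ hRfge)
    calc ((sA i0 + (i+1) * ((i+3)^(i+3)+1) : ℕ) : ℝ) * ((i:ℝ)+2)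
        = (((sA i0 + (i+1) * ((i+3)^(i+3)+1)) * (i+2) : ℕ) : ℝ) := by push_cast; ring
    _ ≤ (((sA i0 + 1) * Rf (sA (i-1)) (i-1) : ℕ) : ℝ) := by exact_mod_cast hchain
    _ = (((sA i0 : ℕ) : ℝ) + 1) * ((Rf (sA (i-1)) (i-1) : ℕ) : ℝ) := by push_cast; ring
  have hstep3 : (((sA i0 : ℕ) : ℝ) + 1) / ((i:ℝ)+2) < ε := by
    rw [div_lt_iff₀ (by positivity)]
    have hLi : (L : ℝ) ≤ (i:ℝ)+2 := by
      have : L ≤ i+2 := by omega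
      exact_mod_cast this
    have h1 : ((sA i0 : ℕ) : ℝ) + 1 < ε * L := by
      rw [div_lt_iff₀ hε] at hL
      linarith
    calc ((sA i0 : ℕ) : ℝ) + 1 < ε * L := h1
    _ ≤ ε * ((i:ℝ)+2) := by
        apply mul_le_mul_of_nonneg_left hLi (le_of_lt hε)
  exact lt_of_le_of_lt (le_trans hstep1 hstep2) hstep3


noncomputable def Pl (n r : ℕ) : ℝ := ∏ m ∈ Finset.range r, (qq (n+m+1) : ℝ)
noncomputable def Sv (n : ℕ) : ℝ := ∑' j : ℕ, (EE (n+1+j) : ℝ) / Pl n (j+1)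

lemma Pl_pos (n r : ℕ) : 0 < Pl n r := by
  apply Finset.prod_pos
  intro m _
  have := qq_ge (n+m+1) (by omega)
  exact_mod_cast (by omega : 0 < qq (n+m+1))

lemma Pl_ge (n r : ℕ) : (2:ℝ)^r ≤ Pl n r := by
  unfold Pl
  have hconst : (2:ℝ)^r = ∏ _m ∈ Finset.range r, (2:ℝ) := by
    rw [Finset.prod_const, Finset.card_range]
  rw [hconst]
  apply Finset.prod_le_prod (fun _ _ => by norm_num)
  intro m _
  have := qq_ge (n+m+1) (by omega)
  exact_mod_cast this

lemma Pl_succ (n r : ℕ) : Pl n (r+1) = Pl n r * (qq (n+r+1) : ℝ) := Finset.prod_range_succ _ _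

lemma term_nonneg (n j : ℕ) : 0 ≤ (EE (n+1+j) : ℝ) / Pl n (j+1) :=
  div_nonneg (Nat.cast_nonneg _) (le_of_lt (Pl_pos _ _))

lemma term_le (n j : ℕ) : (EE (n+1+j) : ℝ) / Pl n (j+1) ≤ (1/2)^j := by
  have hE : (EE (n+1+j) : ℝ) ≤ (qq (n+j+1) : ℝ) := by
    have h := EE_lt (n+1+j) (by omega)
    have h2 : qq (n+1+j) = qq (n+j+1) := congrArg qq (by omega)
    rw [h2] at h
    exact_mod_cast le_of_lt h
  have hPl : Pl n (j+1) = Pl n j * (qq (n+j+1) : ℝ) := Pl_succ n j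
  have hqpos : (0:ℝ) < (qq (n+j+1) : ℝ) := by
    have := qq_ge (n+j+1) (by omega)
    exact_mod_cast (by omega : 0 < qq (n+j+1))
  have hPpos := Pl_pos n j
  calc (EE (n+1+j) : ℝ) / Pl n (j+1) ≤ (qq (n+j+1) : ℝ) / Pl n (j+1) :=
        (div_le_div_iff_of_pos_right (Pl_pos n (j+1))).mpr hE
  _ = (Pl n j)⁻¹ := by
        rw [hPl]
        field_simp
  _ ≤ ((2:ℝ)^j)⁻¹ := inv_anti₀ (by positivity) (Pl_ge n j)
  _ = (1/2)^j := by rw [one_div, inv_pow]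

lemma summable_term (n : ℕ) : Summable (fun j => (EE (n+1+j) : ℝ) / Pl n (j+1)) := by
  apply Summable.of_nonneg_of_le (term_nonneg n) (term_le n)
  exact summable_geometric_of_lt_one (by norm_num) (by norm_num)

lemma Sv_nonneg (n : ℕ) : 0 ≤ Sv n := tsum_nonneg (term_nonneg n)

lemma qq_real_pos (n : ℕ) (hn : 1 ≤ n) : (0:ℝ) < (qq n : ℝ) := by
  have := qq_ge n hn
  exact_mod_cast (by omega : 0 < qq n)

lemma Sv_rec (n : ℕ) : Sv n = ((EE (n+1) : ℝ) + Sv (n+1)) / (qq (n+1) : ℝ) := by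
  have hsum := summable_term n
  have h0 : Sv n = (EE (n+1+0) : ℝ) / Pl n (0+1)
      + ∑' j, (EE (n+1+(j+1)) : ℝ) / Pl n ((j+1)+1) := Summable.tsum_eq_zero_add hsum
  have hq0 : (qq (n+1) : ℝ) ≠ 0 := ne_of_gt (qq_real_pos _ (by omega))
  have hterm : ∀ j, (EE (n+1+(j+1)) : ℝ) / Pl n ((j+1)+1)
      = (qq (n+1) : ℝ)⁻¹ * ((EE ((n+1)+1+j) : ℝ) / Pl (n+1) (j+1)) := by
    intro j
    have hnum : EE (n+1+(j+1)) = EE ((n+1)+1+j) := congrArg EE (by omega)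
    have hden : Pl n ((j+1)+1) = (qq (n+1) : ℝ) * Pl (n+1) (j+1) := by
      unfold Pl
      rw [Finset.prod_range_succ']
      rw [mul_comm]
      congr 1
      apply Finset.prod_congr rfl
      intro m _
      exact congrArg (fun z => ((qq z : ℕ) : ℝ)) (by omega)
    rw [hnum, hden]
    rw [div_eq_mul_inv, div_eq_mul_inv, mul_inv]
    ring
  have htsum : ∑' j, (EE (n+1+(j+1)) : ℝ) / Pl n ((j+1)+1)
      = (qq (n+1) : ℝ)⁻¹ * Sv (n+1) := by
    rw [tsum_congr hterm]
    exact tsum_mul_left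
  rw [h0, htsum]
  have hPl1 : Pl n (0+1) = (qq (n+1) : ℝ) := by
    unfold Pl
    rw [Finset.prod_range_one]
  rw [hPl1]
  field_simp

lemma partial_le (n J : ℕ) :
    ∑ j ∈ Finset.range J, (EE (n+1+j) : ℝ) / Pl n (j+1) ≤ 1 - (Pl n J)⁻¹ := by
  induction J with
  | zero =>
    simp [Pl]
  | succ J ih =>
    rw [Finset.sum_range_succ]
    have hq2 : 2 ≤ qq (n+J+1) := qq_ge _ (by omega)
    have hqR : (2:ℝ) ≤ (qq (n+J+1) : ℝ) := by exact_mod_cast hq2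
    have hE : (EE (n+1+J) : ℝ) ≤ (qq (n+J+1) : ℝ) - 1 := by
      have h := EE_lt (n+1+J) (by omega)
      have h2 : qq (n+1+J) = qq (n+J+1) := congrArg qq (by omega)
      rw [h2] at h
      have h3 : EE (n+1+J) + 1 ≤ qq (n+J+1) := h
      have h4 : (EE (n+1+J) : ℝ) + 1 ≤ (qq (n+J+1) : ℝ) := by exact_mod_cast h3
      linarith
    have hPpos := Pl_pos n J
    have hqpos : (0:ℝ) < (qq (n+J+1) : ℝ) := by linarith
    have hPl : Pl n (J+1) = Pl n J * (qq (n+J+1) : ℝ) := Pl_succ n J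
    have hterm : (EE (n+1+J) : ℝ) / Pl n (J+1)
        ≤ ((qq (n+J+1) : ℝ) - 1) / (Pl n J * (qq (n+J+1) : ℝ)) := by
      rw [hPl]
      exact (div_le_div_iff_of_pos_right (by positivity)).mpr hE
    have hid : (1 - (Pl n J)⁻¹) + ((qq (n+J+1) : ℝ) - 1) / (Pl n J * (qq (n+J+1) : ℝ))
        = 1 - (Pl n (J+1))⁻¹ := by
      rw [hPl]
      field_simp
      ring
    linarith

lemma Sv_le_one (n : ℕ) : Sv n ≤ 1 := by
  apply Real.tsum_le_of_sum_range_le (term_nonneg n)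
  intro J
  have h := partial_le n J
  have h2 : 0 ≤ (Pl n J)⁻¹ := le_of_lt (inv_pos.mpr (Pl_pos n J))
  linarith

lemma Sv_lt_one_aux : ∀ d n, EE (n+1+d) + 2 ≤ qq (n+1+d) → Sv n < 1 := by
  intro d
  induction d with
  | zero =>
    intro n hgood
    rw [show n+1+0 = n+1 by omega] at hgood
    have hrec := Sv_rec n
    have hq := qq_real_pos (n+1) (by omega)
    have hS' := Sv_le_one (n+1)
    have hEr : (EE (n+1) : ℝ) + 2 ≤ (qq (n+1) : ℝ) := by exact_mod_cast hgood
    rw [hrec, div_lt_one hq]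
    linarith
  | succ d ih =>
    intro n hgood
    have hrec := Sv_rec n
    have hq := qq_real_pos (n+1) (by omega)
    have hS' : Sv (n+1) < 1 := ih (n+1)
      (by rw [show (n+1)+1+d = n+1+(d+1) by omega]; exact hgood)
    have hE : EE (n+1) < qq (n+1) := EE_lt _ (by omega)
    have hEr : (EE (n+1) : ℝ) + 1 ≤ (qq (n+1) : ℝ) := by exact_mod_cast hE
    rw [hrec, div_lt_one hq]
    linarith

lemma exists_good (N : ℕ) : ∃ n', N ≤ n' ∧ EE n' + 2 ≤ qq n' := by
  have ho : (N+1+2 : ℕ) < ln (N+1) := by have := ln_ge (N+1); omega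
  have hmod : (N+1+2) % (4*(N+1+2)) = N+1+2 := Nat.mod_eq_of_lt (by omega)
  have hb := bpos_digit (N+1) (N+1+2) ho (by rw [hmod]; omega)
  refine ⟨sA (N+1) + (N+1+2) + 1, ?_, ?_⟩
  · have := le_sA (N+1); omega
  · rw [hb.1, hb.2]
    have := Mb_ge (N+1); have := ln_ge (N+1)
    omega

lemma Sv_lt_one (n : ℕ) : Sv n < 1 := by
  obtain ⟨n', hn', hgood⟩ := exists_good (n+1)
  exact Sv_lt_one_aux (n' - (n+1)) n
    (by rw [show n+1+(n'-(n+1)) = n' by omega]; exact hgood)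

lemma cantor_eq : cantorVal qq EE = Sv 0 := by
  unfold cantorVal Sv Pl
  apply tsum_congr
  intro j
  congr 1
  · exact congrArg (fun z => ((EE z : ℕ) : ℝ)) (by omega : j + 1 = 0+1+j)
  · apply Finset.prod_congr rfl
    intro m _
    exact congrArg (fun z => ((qq z : ℕ) : ℝ)) (by omega : m + 1 = 0+m+1)

noncomputable def PPf (n : ℕ) : ℝ := ∏ m ∈ Finset.range n, (qq (m+1) : ℝ)

lemma PP_S0 : ∀ n, ∃ A : ℕ, PPf n * Sv 0 = (A:ℝ) + Sv n := by
  intro n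
  induction n with
  | zero => exact ⟨0, by simp [PPf]⟩
  | succ n ih =>
    obtain ⟨A, hA⟩ := ih
    refine ⟨qq (n+1) * A + EE (n+1), ?_⟩
    have hPP : PPf (n+1) = PPf n * (qq (n+1) : ℝ) := Finset.prod_range_succ _ _
    have hrec := Sv_rec n
    have hq : (qq (n+1) : ℝ) ≠ 0 := ne_of_gt (qq_real_pos _ (by omega))
    have hqS : (qq (n+1) : ℝ) * Sv n = (EE (n+1) : ℝ) + Sv (n+1) := by
      rw [hrec]; field_simp
    calc PPf (n+1) * Sv 0 = (qq (n+1) : ℝ) * (PPf n * Sv 0) := by rw [hPP]; ring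
    _ = (qq (n+1) : ℝ) * ((A:ℝ) + Sv n) := by rw [hA]
    _ = (qq (n+1) : ℝ) * (A:ℝ) + ((qq (n+1) : ℝ) * Sv n) := by ring
    _ = (qq (n+1) : ℝ) * (A:ℝ) + ((EE (n+1) : ℝ) + Sv (n+1)) := by rw [hqS]
    _ = ((qq (n+1) * A + EE (n+1) : ℕ) : ℝ) + Sv (n+1) := by push_cast; ring

lemma TQ_eq_S (n : ℕ) : TQ qq (Sv 0) n = Sv n := by
  unfold TQ
  obtain ⟨A, hA⟩ := PP_S0 n
  rw [show (∏ m ∈ Finset.range n, (qq (m+1) : ℝ)) = PPf n from rfl, hA]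
  rw [show ((A:ℕ):ℝ) = (((A:ℤ)):ℝ) by push_cast; ring]
  rw [Int.fract_intCast_add]
  exact Int.fract_eq_self.mpr ⟨Sv_nonneg n, Sv_lt_one n⟩


def APred (t : ℕ) : Prop := (t - sA (idx t)) % (4*(idx t + 2)) < idx t + 2
instance : DecidablePred APred := fun _ => by unfold APred; infer_instance

lemma Sv_half (t : ℕ) (hB : ¬ APred t) : Sv t < 1/2 := by
  unfold APred at hB
  have h1 : sA (idx t) ≤ t := idx_spec1 t
  have h2 : t < sA (idx t + 1) := idx_spec2 t
  have ho : t - sA (idx t) < ln (idx t) := by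
    have := sA_succ (idx t)
    omega
  have hb := bpos_digit (idx t) (t - sA (idx t)) ho hB
  have hrec := Sv_rec t
  have hE : EE (t+1) = idx t + 2 := by
    rw [show t+1 = sA (idx t) + (t - sA (idx t)) + 1 by omega]
    exact hb.1
  have hq : qq (t+1) = Mb (idx t) := by
    rw [show t+1 = sA (idx t) + (t - sA (idx t)) + 1 by omega]
    exact hb.2
  have hS1 := Sv_lt_one (t+1)
  have hS0 := Sv_nonneg (t+1)
  have hMb : 4*(idx t + 2)+2 ≤ Mb (idx t) := by
    have := ln_ge (idx t); have := Mb_ge (idx t)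
    omega
  have hMpos : (0:ℝ) < (Mb (idx t) : ℝ) := by
    exact_mod_cast (by omega : 0 < Mb (idx t))
  rw [hrec, hE, hq, div_lt_iff₀ hMpos]
  have hcast : (2:ℝ)*((idx t : ℝ)+3) ≤ (Mb (idx t) : ℝ) := by
    exact_mod_cast (show 2*(idx t + 3) ≤ Mb (idx t) by omega)
  push_cast
  linarith

lemma AP_chunk (j T : ℕ) (hT1 : sA j ≤ T) (hT2 : T ≤ sA (j+1)) :
    (((Finset.Ico (sA j) T).filter APred).card : ℝ)
      ≤ ((T - sA j : ℕ) : ℝ)/4 + ((j:ℝ)+2) := by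
  have hTle : T - sA j ≤ ln j := by have := sA_succ j; omega
  have hIco : Finset.Ico (sA j) T
      = (Finset.range (T - sA j)).map ⟨fun o => sA j + o, fun a b h => by simpa using h⟩ := by
    ext x
    simp only [Finset.mem_Ico, Finset.mem_map, Finset.mem_range, Function.Embedding.coeFn_mk]
    constructor
    · intro ⟨ha, hb2⟩; exact ⟨x - sA j, by omega, by show sA j + (x - sA j) = x; omega⟩
    · rintro ⟨o, ho, rfl⟩; show sA j ≤ sA j + o ∧ sA j + o < T; omega
  rw [hIco, Finset.filter_map, Finset.card_map]
  show (((Finset.range (T - sA j)).filter (fun o => APred (sA j + o))).card : ℝ) ≤ _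
  have hcong : (Finset.range (T - sA j)).filter
        (fun o => APred (sA j + o))
      = (Finset.range (T - sA j)).filter (fun o => o % (4*(j+2)) < j+2) := by
    apply Finset.filter_congr
    intro o ho
    simp only [Finset.mem_range] at ho
    have holn : o < ln j := by omega
    have hidx : idx (sA j + o) = j := idx_eq j o holn
    unfold APred
    rw [hidx, Nat.add_sub_cancel_left]
  rw [hcong]
  -- periodic count bound
  have hper : ∀ x r, r < 4*(j+2) → ((x*(4*(j+2)) + r) % (4*(j+2)) < j+2 ↔ r % (4*(j+2)) < j+2) := by
    intro x r _
    rw [show x*(4*(j+2)) + r = r + x*(4*(j+2)) by ring, Nat.add_mul_mod_self_right]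
  have hperc : ((Finset.range (4*(j+2))).filter (fun r => r % (4*(j+2)) < j+2)).card = j+2 := by
    have : (Finset.range (4*(j+2))).filter (fun r => r % (4*(j+2)) < j+2)
        = (Finset.range (4*(j+2))).filter (fun r => r < j+2) := by
      apply Finset.filter_congr
      intro r hr
      simp only [Finset.mem_range] at hr
      rw [Nat.mod_eq_of_lt hr]
    rw [this, filter_range_le _ _ (by omega), Finset.card_range]
  have hcb := count_bounds (4*(j+2)) (j+2) (T - sA j) (by omega)
    (fun r => r % (4*(j+2)) < j+2) hper hperc
  have hnat : ((Finset.range (T - sA j)).filter (fun o => o % (4*(j+2)) < j+2)).card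
      ≤ (T - sA j)/4 + (j+2) := by
    have h1 : ((T - sA j)/(4*(j+2)))*(j+2) ≤ (T - sA j)/4 := by
      rw [← Nat.div_div_eq_div_mul]
      exact Nat.div_mul_le_self _ _
    omega
  calc (((Finset.range (T - sA j)).filter (fun o => o % (4*(j+2)) < j+2)).card : ℝ)
      ≤ (((T - sA j)/4 + (j+2) : ℕ) : ℝ) := by exact_mod_cast hnat
  _ ≤ ((T - sA j : ℕ) : ℝ)/4 + ((j:ℝ)+2) := by
      push_cast
      have := Nat.cast_div_le (α := ℝ) (m := T - sA j) (n := 4)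
      push_cast at this
      linarith

lemma sA_big (i : ℕ) (hi : 1 ≤ i) : 12*(i+2)^2 ≤ sA i := by
  have h1 : ln (i-1) ≤ sA i := by
    have := sA_succ (i-1)
    rw [show i-1+1 = i by omega] at this
    omega
  have h2 : Rf (sA (i-1)) (i-1) ≤ ln (i-1) :=
    Nat.le_mul_of_pos_right _ (cy_pos _)
  have hbase : i+2 ≤ sA (i-1) + (i-1) + 3 := by have := le_sA (i-1); omega
  have h3 : (i+2)^6 ≤ Rf (sA (i-1)) (i-1) := by
    unfold Rf
    calc (i+2)^6 ≤ (i+2)^(3*(i-1)+30) := Nat.pow_le_pow_right (by omega) (by omega)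
    _ ≤ (sA (i-1)+(i-1)+3)^(3*(i-1)+30) := Nat.pow_le_pow_left hbase _
  have h4 : 12*(i+2)^2 ≤ (i+2)^6 := by
    have h12 : 12 ≤ (i+2)^4 :=
      le_trans (by norm_num : (12:ℕ) ≤ 2^4) (Nat.pow_le_pow_left (by omega) _)
    calc 12*(i+2)^2 ≤ (i+2)^4*(i+2)^2 := Nat.mul_le_mul_right _ h12
    _ = (i+2)^6 := by rw [← pow_add]
  omega

lemma not_ud : ¬ UDMod1 (TQ qq (Sv 0)) := by
  intro h
  have h2 := h (1/2) 1 (by norm_num) (by norm_num) (le_refl 1)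
  have hev : ∀ᶠ N in Filter.atTop, (((Finset.range N).filter fun n =>
      1/2 ≤ Int.fract (TQ qq (Sv 0) n) ∧ Int.fract (TQ qq (Sv 0) n) < 1).card : ℝ) / N
        ≤ 1/3 := by
    rw [Filter.eventually_atTop]
    refine ⟨sA 2 + 1, ?_⟩
    intro N hN
    have hN1 : 1 ≤ N := by omega
    have hi2 : 2 ≤ idx (N-1) := idx_ge (N-1) 2 (by omega)
    set i := idx (N-1) with hidef
    have hNle : N ≤ sA (i+1) := by
      have h3 := idx_spec2 (N-1)
      rw [← hidef] at h3
      omega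
    have hNgt : sA i < N := by
      have h3 := idx_spec1 (N-1)
      rw [← hidef] at h3
      omega
    -- subset into APred
    have hsub : (Finset.range N).filter (fun n =>
        1/2 ≤ Int.fract (TQ qq (Sv 0) n) ∧ Int.fract (TQ qq (Sv 0) n) < 1)
        ⊆ (Finset.range N).filter APred := by
      intro n hn
      rw [Finset.mem_filter] at hn ⊢
      refine ⟨hn.1, ?_⟩
      by_contra hAP
      have hhalf := Sv_half n hAP
      have heq : Int.fract (TQ qq (Sv 0) n) = Sv n := by
        rw [TQ_eq_S n]
        exact Int.fract_eq_self.mpr ⟨Sv_nonneg n, Sv_lt_one n⟩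
      rw [heq] at hn
      linarith [hn.2.1]
    have hcard := Finset.card_le_card hsub
    -- count of APred via chunks
    have hchunks := sum_chunks (fun t => if APred t then (1:ℝ) else 0) i N hNle
    have hconst := sum_chunks (fun _ => (1/4:ℝ)) i N hNle
    have hcount : (((Finset.range N).filter APred).card : ℝ)
        = ∑ j ∈ Finset.range (i+1),
            (((Finset.Ico (sA j) (min N (sA (j+1)))).filter APred).card : ℝ) := by
      rw [← Finset.sum_boole, hchunks]
      apply Finset.sum_congr rfl
      intro j _
      rw [Finset.sum_boole]
    have hconstval : (N:ℝ)/4 = ∑ j ∈ Finset.range (i+1),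
        ((min N (sA (j+1)) - sA j : ℕ) : ℝ)/4 := by
      have hl : ∑ t ∈ Finset.range N, (1/4:ℝ) = (N:ℝ)/4 := by
        rw [Finset.sum_const, Finset.card_range, nsmul_eq_mul]
        ring
      have hr : ∀ j ∈ Finset.range (i+1),
          ∑ t ∈ Finset.Ico (sA j) (min N (sA (j+1))), (1/4:ℝ)
            = ((min N (sA (j+1)) - sA j : ℕ) : ℝ)/4 := by
        intro j _
        rw [Finset.sum_const, Nat.card_Ico, nsmul_eq_mul]
        ring
      rw [← hl, hconst, Finset.sum_congr rfl hr]
    have hbound : (((Finset.range N).filter APred).card : ℝ)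
        ≤ (N:ℝ)/4 + ((i:ℝ)+2)^2 := by
      rw [hcount]
      have hstep : ∀ j ∈ Finset.range (i+1),
          (((Finset.Ico (sA j) (min N (sA (j+1)))).filter APred).card : ℝ)
            ≤ ((min N (sA (j+1)) - sA j : ℕ) : ℝ)/4 + ((j:ℝ)+2) := by
        intro j hj
        simp only [Finset.mem_range] at hj
        apply AP_chunk
        · have h5 : sA j ≤ sA i := sA_mono.monotone (by omega)
          have h6 : sA j ≤ sA (j+1) := le_of_lt (sA_lt_succ j)
          omega
        · exact min_le_right _ _
      calc ∑ j ∈ Finset.range (i+1),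
            (((Finset.Ico (sA j) (min N (sA (j+1)))).filter APred).card : ℝ)
          ≤ ∑ j ∈ Finset.range (i+1),
            (((min N (sA (j+1)) - sA j : ℕ) : ℝ)/4 + ((j:ℝ)+2)) :=
            Finset.sum_le_sum hstep
      _ = (∑ j ∈ Finset.range (i+1), ((min N (sA (j+1)) - sA j : ℕ) : ℝ)/4)
            + ∑ j ∈ Finset.range (i+1), ((j:ℝ)+2) := Finset.sum_add_distrib
      _ ≤ (N:ℝ)/4 + ((i:ℝ)+2)^2 := by
          apply add_le_add
          · rw [hconstval]
          · calc ∑ j ∈ Finset.range (i+1), ((j:ℝ)+2)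
                ≤ ∑ _j ∈ Finset.range (i+1), ((i:ℝ)+2) := by
                  apply Finset.sum_le_sum
                  intro j hj
                  simp only [Finset.mem_range] at hj
                  have : (j:ℝ) ≤ (i:ℝ) := by exact_mod_cast (by omega : j ≤ i)
                  linarith
            _ = ((i:ℝ)+1) * ((i:ℝ)+2) := by
                  rw [Finset.sum_const, Finset.card_range, nsmul_eq_mul]
                  push_cast
                  ring
            _ ≤ ((i:ℝ)+2)^2 := by nlinarith [Nat.cast_nonneg (α := ℝ) i]
    -- numeric finish
    have hNpos : (0:ℝ) < (N:ℝ) := by exact_mod_cast hN1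
    have hbig : 12*(i+2)^2 ≤ sA i := sA_big i (by omega)
    have hsq : ((i:ℝ)+2)^2 ≤ (N:ℝ)/12 := by
      have h7 : 12*(i+2)^2 ≤ N := by omega
      have h8 : (12:ℝ)*((i:ℝ)+2)^2 ≤ (N:ℝ) := by exact_mod_cast h7
      linarith
    rw [div_le_iff₀ hNpos]
    calc (((Finset.range N).filter fun n =>
        1/2 ≤ Int.fract (TQ qq (Sv 0) n) ∧ Int.fract (TQ qq (Sv 0) n) < 1).card : ℝ)
        ≤ (((Finset.range N).filter APred).card : ℝ) := by exact_mod_cast hcard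
    _ ≤ (N:ℝ)/4 + ((i:ℝ)+2)^2 := hbound
    _ ≤ (N:ℝ)/4 + (N:ℝ)/12 := by linarith
    _ = 1/3 * (N:ℝ) := by ring
  have hlim := le_of_tendsto h2 hev
  norm_num at hlim

end St9


/-- There exist a basic sequence `Q` and a real number `x ∈ [0,1)`, with `Q`-Cantor series
digits `E`, such that `x` is `Q`-normal but not `Q`-distribution normal. -/
theorem stmt9 : ∃ (q E : ℕ → ℕ) (x : ℝ),
    (∀ n, 1 ≤ n → 2 ≤ q n) ∧
    (∀ n, 1 ≤ n → E n < q n) ∧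
    (∀ N, ∃ n, N ≤ n ∧ E n ≠ q n - 1) ∧
    x ∈ Set.Ico (0 : ℝ) 1 ∧
    x = cantorVal q E ∧
    QNormal q E ∧
    ¬ UDMod1 (TQ q x) := by
  refine ⟨St9.qq, St9.EE, cantorVal St9.qq St9.EE, ?_, ?_, ?_, ?_, rfl, ?_, ?_⟩
  · exact fun n hn => St9.qq_ge n hn
  · exact fun n hn => St9.EE_lt n hn
  · intro N
    obtain ⟨n', hn', hgood⟩ := St9.exists_good N
    refine ⟨n', hn', ?_⟩
    omega
  · rw [St9.cantor_eq]
    exact ⟨St9.Sv_nonneg 0, St9.Sv_lt_one 0⟩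
  · exact St9.qnormal
  · rw [St9.cantor_eq]
    exact St9.not_ud
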